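/- Let λ₁, λ₂, ε₀, Ω₁ > 0 and define h(ρ₂) = 1 − (λ₂/(λ₂ + ε₀·ρ₂·λ₁/Ω₁)) · exp( −λ₁(ε₀ + ε₀²)/Ω₁ − λ₂ε₀/ρ₂ ) for ρ₂ > 0, and ρ₂⁺ = (ε₀λ₁λ₂ + λ₂·√(4Ω₁λ₁ + ε₀²λ₁²)) / (2λ₁). Then ρ₂⁺ > 0, h is strictly decreasing on (0, ρ₂⁺] and strictly increasing on [ρ₂⁺, ∞); moreover the other root ρ₂⁻ = (ε₀λ₁λ₂ − λ₂·√(4Ω₁λ₁ + ε₀²λ₁²)) / (2λ₁) of λ₁ρ₂² − ε₀λ₁λ₂ρ₂ − Ω₁λ₂² is negative. -/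

import Mathlib

open Real Set

/-- Appendix F (monotonicity of the uplink NOMA outage probability): for
`h(ρ₂) = 1 - (l₂/(l₂ + ε₀ρ₂l₁/W₁)) exp(-l₁(ε₀+ε₀²)/W₁ - l₂ε₀/ρ₂)` (the common outage
probability when user 1 transmits at maximum SNR `W₁`), the point
`ρ₂⁺ = (ε₀l₁l₂ + l₂√(4W₁l₁ + ε₀²l₁²))/(2l₁)` is positive, `h` is strictly decreasing on
`(0, ρ₂⁺]` and strictly increasing on `[ρ₂⁺, ∞)`, and the other root
`ρ₂⁻ = (ε₀l₁l₂ - l₂√(4W₁l₁ + ε₀²l₁²))/(2l₁)` of `l₁ρ₂² - ε₀l₁l₂ρ₂ - W₁l₂²` is negative. -/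
theorem uplink_noma_outage_unimodality
    (l₁ l₂ ε₀ W₁ : ℝ) (hl₁ : 0 < l₁) (hl₂ : 0 < l₂) (hε₀ : 0 < ε₀) (hW₁ : 0 < W₁)
    (h : ℝ → ℝ)
    (hh : ∀ ρ₂, 0 < ρ₂ → h ρ₂ =
      1 - (l₂ / (l₂ + ε₀ * ρ₂ * l₁ / W₁)) *
        Real.exp (-(l₁ * (ε₀ + ε₀ ^ 2) / W₁) - l₂ * ε₀ / ρ₂))
    (ρ₂p ρ₂m : ℝ)
    (hρ₂p : ρ₂p = (ε₀ * l₁ * l₂ + l₂ * Real.sqrt (4 * W₁ * l₁ + ε₀ ^ 2 * l₁ ^ 2)) /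
      (2 * l₁))
    (hρ₂m : ρ₂m = (ε₀ * l₁ * l₂ - l₂ * Real.sqrt (4 * W₁ * l₁ + ε₀ ^ 2 * l₁ ^ 2)) /
      (2 * l₁)) :
    0 < ρ₂p ∧ StrictAntiOn h (Set.Ioc 0 ρ₂p) ∧ StrictMonoOn h (Set.Ici ρ₂p) ∧ ρ₂m < 0 := by
  set s := Real.sqrt (4 * W₁ * l₁ + ε₀ ^ 2 * l₁ ^ 2) with hs_def
  have harg : 0 < 4 * W₁ * l₁ + ε₀ ^ 2 * l₁ ^ 2 := by positivity
  have hs_pos : 0 < s := Real.sqrt_pos.mpr harg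
  have hs_sq : s ^ 2 = 4 * W₁ * l₁ + ε₀ ^ 2 * l₁ ^ 2 :=
    Real.sq_sqrt harg.le
  have hs_gt : ε₀ * l₁ < s := by nlinarith [hs_pos, hε₀, hl₁, hW₁]
  have hp_pos : 0 < ρ₂p := by
    rw [hρ₂p]; positivity
  have hm_neg : ρ₂m < 0 := by
    rw [hρ₂m]
    apply div_neg_of_neg_of_pos _ (by positivity)
    nlinarith [hs_gt, hl₂]
  -- factorization of the quadratic
  have hkey : ∀ ρ : ℝ, l₁ * ρ ^ 2 - ε₀ * l₁ * l₂ * ρ - W₁ * l₂ ^ 2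
      = l₁ * (ρ - ρ₂p) * (ρ - ρ₂m) := by
    intro ρ
    rw [hρ₂p, hρ₂m]
    field_simp
    linear_combination (l₂ ^ 2) * hs_sq
  -- derivative of h at positive points
  have hderiv : ∀ ρ : ℝ, 0 < ρ → HasDerivAt h
      (l₂ * Real.exp (-(l₁ * (ε₀ + ε₀ ^ 2) / W₁) - l₂ * ε₀ / ρ) * ε₀ /
        ((l₂ + ε₀ * ρ * l₁ / W₁) ^ 2 * ρ ^ 2 * W₁) *
        (l₁ * ρ ^ 2 - ε₀ * l₁ * l₂ * ρ - W₁ * l₂ ^ 2)) ρ := by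
    intro ρ hρ
    have hu : 0 < l₂ + ε₀ * ρ * l₁ / W₁ := by positivity
    have hρne : ρ ≠ 0 := hρ.ne'
    have hune : l₂ + ε₀ * ρ * l₁ / W₁ ≠ 0 := hu.ne'
    have hdu : HasDerivAt (fun x : ℝ => l₂ + ε₀ * x * l₁ / W₁) (ε₀ * l₁ / W₁) ρ := by
      have : HasDerivAt (fun x : ℝ => l₂ + ε₀ * x * l₁ / W₁)
          (0 + ε₀ * 1 * l₁ / W₁) ρ :=
        (hasDerivAt_const ρ l₂).add
          ((((hasDerivAt_id ρ).const_mul ε₀).mul_const l₁).div_const W₁)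
      simpa using this
    have hq : HasDerivAt (fun x : ℝ => l₂ / (l₂ + ε₀ * x * l₁ / W₁))
        ((0 * (l₂ + ε₀ * ρ * l₁ / W₁) - l₂ * (ε₀ * l₁ / W₁)) /
          (l₂ + ε₀ * ρ * l₁ / W₁) ^ 2) ρ :=
      (hasDerivAt_const ρ l₂).div hdu hune
    have hv : HasDerivAt (fun x : ℝ => -(l₁ * (ε₀ + ε₀ ^ 2) / W₁) - l₂ * ε₀ / x)
        (0 - (0 * ρ - l₂ * ε₀ * 1) / ρ ^ 2) ρ :=
      (hasDerivAt_const ρ (-(l₁ * (ε₀ + ε₀ ^ 2) / W₁))).sub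
        ((hasDerivAt_const ρ (l₂ * ε₀)).div (hasDerivAt_id ρ) hρne)
    have hexp := hv.exp
    have hF : HasDerivAt (fun x : ℝ =>
        1 - (l₂ / (l₂ + ε₀ * x * l₁ / W₁)) *
          Real.exp (-(l₁ * (ε₀ + ε₀ ^ 2) / W₁) - l₂ * ε₀ / x))
        (0 - ((((0 * (l₂ + ε₀ * ρ * l₁ / W₁) - l₂ * (ε₀ * l₁ / W₁)) /
            (l₂ + ε₀ * ρ * l₁ / W₁) ^ 2)) *
            Real.exp (-(l₁ * (ε₀ + ε₀ ^ 2) / W₁) - l₂ * ε₀ / ρ) +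
          (l₂ / (l₂ + ε₀ * ρ * l₁ / W₁)) *
            (Real.exp (-(l₁ * (ε₀ + ε₀ ^ 2) / W₁) - l₂ * ε₀ / ρ) *
              (0 - (0 * ρ - l₂ * ε₀ * 1) / ρ ^ 2)))) ρ :=
      (hasDerivAt_const ρ 1).sub (hq.mul hexp)
    have hEq : h =ᶠ[nhds ρ] (fun x : ℝ =>
        1 - (l₂ / (l₂ + ε₀ * x * l₁ / W₁)) *
          Real.exp (-(l₁ * (ε₀ + ε₀ ^ 2) / W₁) - l₂ * ε₀ / x)) := by
      filter_upwards [Ioi_mem_nhds hρ] with y hy using hh y hy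
    have := hF.congr_of_eventuallyEq hEq
    convert this using 1
    · rfl
    · rfl
    field_simp
    ring
  have hcont : ∀ ρ : ℝ, 0 < ρ → ContinuousAt h ρ := fun ρ hρ =>
    (hderiv ρ hρ).differentiableAt.continuousAt
  have hEpos : ∀ ρ : ℝ, 0 < ρ →
      0 < l₂ * Real.exp (-(l₁ * (ε₀ + ε₀ ^ 2) / W₁) - l₂ * ε₀ / ρ) * ε₀ /
        ((l₂ + ε₀ * ρ * l₁ / W₁) ^ 2 * ρ ^ 2 * W₁) := by
    intro ρ hρ
    have hu : 0 < l₂ + ε₀ * ρ * l₁ / W₁ := by positivity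
    positivity
  refine ⟨hp_pos, ?_, ?_, hm_neg⟩
  · apply strictAntiOn_of_deriv_neg (convex_Ioc 0 ρ₂p)
    · exact fun x hx => (hcont x hx.1).continuousWithinAt
    · intro x hx
      rw [interior_Ioc] at hx
      have hx0 : 0 < x := hx.1
      rw [(hderiv x hx0).deriv]
      apply mul_neg_of_pos_of_neg (hEpos x hx0)
      rw [hkey x]
      have h1 : x - ρ₂p < 0 := sub_neg.mpr hx.2
      have h2 : 0 < x - ρ₂m := by linarith [hm_neg, hx0]
      exact mul_neg_of_neg_of_pos (mul_neg_of_pos_of_neg hl₁ h1) h2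
  · apply strictMonoOn_of_deriv_pos (convex_Ici ρ₂p)
    · exact fun x hx => (hcont x (lt_of_lt_of_le hp_pos hx)).continuousWithinAt
    · intro x hx
      rw [interior_Ici] at hx
      have hx0 : 0 < x := lt_trans hp_pos hx
      rw [(hderiv x hx0).deriv]
      apply mul_pos (hEpos x hx0)
      rw [hkey x]
      have h1 : 0 < x - ρ₂p := sub_pos.mpr hx
      have h2 : 0 < x - ρ₂m := by linarith [hm_neg, hx0]
      positivity
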